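/- Let F be a Borel probability measure on [0,1] with continuous density f with respect to Lebesgue measure, and suppose lim_{x→1⁻} f(x) = c for some c > 0. Then ζ_F(k) = ∑_{j=1}^∞ m_j(F)^k converges for every integer k ≥ 2, and ∑_{k=2}^n (n choose k) (−1)^k ζ_F(k) ∼ c n log n as n → ∞. -/

import Mathlib

open Filter Finset Real Topology intervalIntegral MeasureTheory

lemma aux_pow_ub (m : ℝ) (hm0 : 0 ≤ m) (hm1 : m ≤ 1) (n : ℕ) :
    (1 - m)^n ≤ 1 - n*m + n^2/2 * m^2 := by
  induction n with
  | zero => norm_num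
  | succ n ih =>
    have h1m : 0 ≤ 1 - m := by linarith
    have hpow : (0:ℝ) ≤ (1-m)^n := pow_nonneg h1m n
    calc (1-m)^(n+1) = (1-m)^n * (1-m) := by ring
      _ ≤ (1 - n*m + (n:ℝ)^2/2*m^2) * (1-m) :=
          mul_le_mul_of_nonneg_right ih h1m
      _ ≤ 1 - (n+1:ℕ)*m + ((n+1:ℕ):ℝ)^2/2*m^2 := by
          push_cast
          nlinarith [sq_nonneg m, sq_nonneg (m*(n:ℝ)), mul_nonneg (mul_nonneg hm0 hm0) hm0]

lemma aux_pow_lb (m : ℝ) (hm1 : m ≤ 1) (n : ℕ) : 1 - n*m ≤ (1 - m)^n := by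
  have := one_add_mul_le_pow (a := -m) (by linarith) n
  simpa [sub_eq_add_neg, mul_comm] using this

lemma aux_sum_inv_le_log (n : ℕ) : ∑ j ∈ range n, (1:ℝ)/(j+2) ≤ Real.log (n+1) := by
  induction n with
  | zero => simp
  | succ n ih =>
    rw [Finset.sum_range_succ]
    have key : (1:ℝ)/(n+2) ≤ Real.log ((n:ℝ)+2) - Real.log ((n:ℝ)+1) := by
      have h := Real.log_le_sub_one_of_pos (x := ((n:ℝ)+1)/((n:ℝ)+2)) (by positivity)
      rw [Real.log_div (by positivity) (by positivity)] at h
      have hx : ((n:ℝ)+1)/((n:ℝ)+2) - 1 = -(1/((n:ℝ)+2)) := by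
        field_simp; norm_num
      linarith [hx ▸ h]
    have hcast : ((n:ℕ)+1+1 : ℝ) = (n:ℝ)+2 := by push_cast; ring
    push_cast
    rw [show ((n:ℝ)+1+1) = (n:ℝ)+2 by ring]
    linarith [ih]

lemma aux_log_le_sum_inv (n : ℕ) :
    Real.log ((n:ℝ)+2) - Real.log 2 ≤ ∑ j ∈ range n, (1:ℝ)/(j+2) := by
  induction n with
  | zero => simp
  | succ n ih =>
    rw [Finset.sum_range_succ]
    have key : Real.log ((n:ℝ)+3) - Real.log ((n:ℝ)+2) ≤ (1:ℝ)/(n+2) := by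
      have h := Real.log_le_sub_one_of_pos (x := ((n:ℝ)+3)/((n:ℝ)+2)) (by positivity)
      rw [Real.log_div (by positivity) (by positivity)] at h
      have hx : ((n:ℝ)+3)/((n:ℝ)+2) - 1 = 1/((n:ℝ)+2) := by
        field_simp; norm_num
      linarith [hx ▸ h]
    push_cast
    rw [show ((n:ℝ)+1+2) = (n:ℝ)+3 by ring]
    linarith

lemma aux_summable_inv_sq : Summable (fun j : ℕ => 1/((j:ℝ)+2)^2) := by
  have h := (Real.summable_one_div_nat_pow (p := 2)).2 one_lt_two
  have := (summable_nat_add_iff 2).2 h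
  refine this.congr (fun j => ?_)
  push_cast
  ring

lemma aux_tsum_sq_tail (n : ℕ) : ∑' j : ℕ, 1/(((j:ℝ)+(n:ℝ)+2))^2 ≤ 1/((n:ℝ)+1) := by
  apply tsum_le_of_sum_range_le (fun j => by positivity)
  intro N
  have key : ∀ j : ℕ, 1/(((j:ℝ)+(n:ℝ)+2))^2 ≤
      (1/((j:ℝ)+(n:ℝ)+1) - 1/((j:ℝ)+(n:ℝ)+2)) := by
    intro j
    have h1 : (0:ℝ) < (j:ℝ)+(n:ℝ)+1 := by positivity
    have h2 : (0:ℝ) < (j:ℝ)+(n:ℝ)+2 := by positivity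
    rw [div_sub_div _ _ (ne_of_gt h1) (ne_of_gt h2)]
    rw [div_le_div_iff₀ (by positivity) (by positivity)]
    nlinarith
  calc ∑ j ∈ range N, 1/(((j:ℝ)+(n:ℝ)+2))^2
      ≤ ∑ j ∈ range N, (1/((j:ℝ)+(n:ℝ)+1) - 1/((j:ℝ)+(n:ℝ)+2)) :=
        Finset.sum_le_sum (fun j _ => key j)
    _ = 1/((n:ℝ)+1) - 1/((N:ℝ)+(n:ℝ)+1) := by
        have h := Finset.sum_range_sub' (fun j : ℕ => 1/((j:ℝ)+(n:ℝ)+1)) N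
        push_cast at h
        rw [show (1:ℝ)/((n:ℝ)+1) - 1/((N:ℝ)+(n:ℝ)+1)
            = 1/(0+(n:ℝ)+1) - 1/((N:ℝ)+(n:ℝ)+1) by norm_num, ← h]
        exact Finset.sum_congr rfl (fun j _ => by ring)
    _ ≤ 1/((n:ℝ)+1) := by
        have : (0:ℝ) ≤ 1/((N:ℝ)+(n:ℝ)+1) := by positivity
        linarith

lemma aux_log_succ (n : ℕ) (hn : 1 ≤ n) : Real.log ((n:ℝ)+1) ≤ Real.log n + 1 := by
  have hN : (0:ℝ) < n := by exact_mod_cast Nat.pos_of_ne_zero (by omega)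
  have h := Real.log_le_sub_one_of_pos (x := ((n:ℝ)+1)/(n:ℝ)) (by positivity)
  rw [Real.log_div (by positivity) (by positivity)] at h
  have h2 : ((n:ℝ)+1)/(n:ℝ) - 1 = 1/(n:ℝ) := by field_simp; ring
  have h3 : (1:ℝ)/(n:ℝ) ≤ 1 := by
    rw [div_le_one hN]; exact_mod_cast hn
  linarith [h2 ▸ h]

set_option maxHeartbeats 1000000 in
lemma aux_key (a : ℕ → ℝ) (c M : ℝ) (hc : 0 < c)
    (h0 : ∀ j, 0 ≤ a j) (h1 : ∀ j, a j ≤ 1)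
    (hM : ∀ j, a j ≤ M / ((j:ℝ)+2))
    (hlim : Tendsto (fun j : ℕ => ((j:ℝ)+2) * a j) atTop (𝓝 c)) :
    Asymptotics.IsEquivalent atTop
      (fun n : ℕ => ∑' j : ℕ, ((1 - a j)^n - 1 + n * a j))
      (fun n : ℕ => c * n * Real.log n) := by
  -- basic facts
  have hM0 : 0 ≤ M := by
    have := (h0 0).trans (hM 0); by_contra h; push_neg at h
    have : M / ((0:ℕ)+2:ℝ) < 0 := div_neg_of_neg_of_pos h (by norm_num)
    linarith [(h0 0).trans (hM 0)]
  have hsq : ∀ j : ℕ, (a j)^2 ≤ M^2 * (1/((j:ℝ)+2)^2) := by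
    intro j
    have h2 : (0:ℝ) < (j:ℝ)+2 := by positivity
    have := pow_le_pow_left₀ (h0 j) (hM j) 2
    calc (a j)^2 ≤ (M/((j:ℝ)+2))^2 := this
      _ = M^2 * (1/((j:ℝ)+2)^2) := by rw [div_pow]; ring
  have hsum_sq : Summable (fun j : ℕ => (a j)^2) :=
    Summable.of_nonneg_of_le (fun j => sq_nonneg _) hsq (aux_summable_inv_sq.mul_left _)
  have hg0 : ∀ (n : ℕ) (j : ℕ), 0 ≤ (1 - a j)^n - 1 + n * a j := by
    intro n j; have := aux_pow_lb (a j) (h1 j) n; linarith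
  have hg_sq : ∀ (n : ℕ) (j : ℕ), (1 - a j)^n - 1 + n * a j ≤ (n:ℝ)^2/2 * (a j)^2 := by
    intro n j; have := aux_pow_ub (a j) (h0 j) (h1 j) n; linarith
  have hg_lin : ∀ (n : ℕ) (j : ℕ), (1 - a j)^n - 1 + n * a j ≤ n * a j := by
    intro n j
    have : (1 - a j)^n ≤ 1 := pow_le_one₀ (by linarith [h1 j]) (by linarith [h0 j])
    linarith
  have hgsum : ∀ n : ℕ, Summable (fun j : ℕ => (1 - a j)^n - 1 + n * a j) := by
    intro n
    exact Summable.of_nonneg_of_le (hg0 n) (hg_sq n) (hsum_sq.mul_left _)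
  rw [Asymptotics.IsEquivalent, Asymptotics.isLittleO_iff]
  intro ε hε
  set ε₁ := min (ε*c/2) c with hε₁def
  have hε₁pos : 0 < ε₁ := lt_min (by positivity) hc
  have hε₁c : ε₁ ≤ c := min_le_right _ _
  have hε₁half : ε₁ ≤ ε*c/2 := min_le_left _ _
  clear_value ε₁
  obtain ⟨J, hJ⟩ := (Metric.tendsto_atTop.1 hlim) ε₁ hε₁pos
  have hub : ∀ j, J ≤ j → a j ≤ (c+ε₁)/((j:ℝ)+2) := by
    intro j hj
    have := hJ j hj
    rw [Real.dist_eq, abs_lt] at this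
    have h2 : (0:ℝ) < (j:ℝ)+2 := by positivity
    rw [le_div_iff₀ h2]; nlinarith [this.2]
  have hlb : ∀ j, J ≤ j → (c-ε₁)/((j:ℝ)+2) ≤ a j := by
    intro j hj
    have := hJ j hj
    rw [Real.dist_eq, abs_lt] at this
    have h2 : (0:ℝ) < (j:ℝ)+2 := by positivity
    rw [div_le_iff₀ h2]; nlinarith [this.1]
  set C := c*J + (c+ε₁) + (c+ε₁)^2/2 + c*Real.log 2 + (J:ℝ) + 1 with hCdef
  clear_value C
  have hloglim : Tendsto (fun n : ℕ => Real.log n) atTop atTop :=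
    Real.tendsto_log_atTop.comp tendsto_natCast_atTop_atTop
  filter_upwards [eventually_ge_atTop (max J 1),
    hloglim.eventually_ge_atTop (2*C/(ε*c))] with n hn hlogn
  simp only [Pi.sub_apply]
  have hJn : J ≤ n := le_trans (le_max_left _ _) hn
  have hn1 : 1 ≤ n := le_trans (le_max_right _ _) hn
  set N := (n:ℝ) with hNdef
  have hN1 : (1:ℝ) ≤ N := by rw [hNdef]; exact_mod_cast hn1
  have hN0 : (0:ℝ) ≤ N := by linarith
  set ln := Real.log N with hlndef
  have hln0 : 0 ≤ ln := Real.log_nonneg hN1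
  set L := ∑ j ∈ range n, (1:ℝ)/(j+2) with hLdef
  set S := ∑ j ∈ range n, a j with hSdef
  -- bounds on S
  have hSub : S ≤ (J:ℝ) + (c+ε₁) * L := by
    have step : ∀ j ∈ range n, a j ≤ (if j < J then (1:ℝ) else 0) + (c+ε₁)/((j:ℝ)+2) := by
      intro j _
      by_cases hj : j < J
      · simp only [hj, if_pos]
        have : (0:ℝ) ≤ (c+ε₁)/((j:ℝ)+2) := by positivity
        linarith [h1 j]
      · simp only [hj, if_neg, not_false_iff]
        push_neg at hj
        linarith [hub j hj]
    calc S ≤ ∑ j ∈ range n, ((if j < J then (1:ℝ) else 0) + (c+ε₁)/((j:ℝ)+2)) :=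
          Finset.sum_le_sum step
      _ = (∑ j ∈ range n, (if j < J then (1:ℝ) else 0)) + (c+ε₁) * L := by
          rw [Finset.sum_add_distrib, hLdef, Finset.mul_sum]
          congr 1
          exact Finset.sum_congr rfl (fun j _ => by ring)
      _ ≤ (J:ℝ) + (c+ε₁) * L := by
          have : (∑ j ∈ range n, (if j < J then (1:ℝ) else 0)) ≤ (J:ℝ) := by
            rw [Finset.sum_boole]
            have hcard : ((range n).filter (fun j => j < J)).card ≤ J := by
              have hsub : (range n).filter (fun j => j < J) ⊆ range J := by
                intro j hj
                simp only [Finset.mem_filter, Finset.mem_range] at hj ⊢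
                exact hj.2
              simpa using Finset.card_le_card hsub
            exact_mod_cast hcard
          linarith
  have hSlb : (c-ε₁) * L - c*(J:ℝ) ≤ S := by
    have step : ∀ j ∈ range n,
        (c-ε₁)/((j:ℝ)+2) - (if j < J then c else 0) ≤ a j := by
      intro j _
      by_cases hj : j < J
      · simp only [hj, if_pos]
        have h2 : (0:ℝ) < (j:ℝ)+2 := by positivity
        have : (c-ε₁)/((j:ℝ)+2) ≤ c := by
          rw [div_le_iff₀ h2]; nlinarith
        linarith [h0 j]
      · simp only [hj, if_neg, not_false_iff]
        push_neg at hj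
        linarith [hlb j hj]
    have hifsum : (∑ j ∈ range n, (if j < J then c else 0)) ≤ c*(J:ℝ) := by
      have : (∑ j ∈ range n, (if j < J then c else 0))
          = c * (∑ j ∈ range n, (if j < J then (1:ℝ) else 0)) := by
        rw [Finset.mul_sum]
        exact Finset.sum_congr rfl (fun j _ => by split <;> ring)
      rw [this]
      have hb : (∑ j ∈ range n, (if j < J then (1:ℝ) else 0)) ≤ (J:ℝ) := by
        rw [Finset.sum_boole]
        have hcard : ((range n).filter (fun j => j < J)).card ≤ J := by
          have hsub : (range n).filter (fun j => j < J) ⊆ range J := by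
            intro j hj
            simp only [Finset.mem_filter, Finset.mem_range] at hj ⊢
            exact hj.2
          simpa using Finset.card_le_card hsub
        exact_mod_cast hcard
      exact mul_le_mul_of_nonneg_left hb hc.le
    calc (c-ε₁) * L - c*(J:ℝ)
        ≤ (∑ j ∈ range n, (c-ε₁)/((j:ℝ)+2)) - (∑ j ∈ range n, (if j < J then c else 0)) := by
          have : (∑ j ∈ range n, (c-ε₁)/((j:ℝ)+2)) = (c-ε₁) * L := by
            rw [hLdef, Finset.mul_sum]
            exact Finset.sum_congr rfl (fun j _ => by ring)
          linarith
      _ = ∑ j ∈ range n, ((c-ε₁)/((j:ℝ)+2) - (if j < J then c else 0)) := by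
          rw [Finset.sum_sub_distrib]
      _ ≤ S := Finset.sum_le_sum step
  -- split the tsum
  set T := ∑' j : ℕ, ((1 - a j)^n - 1 + n * a j) with hTdef
  set A := ∑ j ∈ range n, ((1 - a j)^n - 1 + n * a j) with hAdef
  set B := ∑' j : ℕ, ((1 - a (j+n))^n - 1 + n * a (j+n)) with hBdef
  have hsplit : T = A + B := (Summable.sum_add_tsum_nat_add n (hgsum n)).symm
  -- bounds on A
  have hA_ub : A ≤ N * S := by
    calc A ≤ ∑ j ∈ range n, (N * a j) := Finset.sum_le_sum (fun j _ => hg_lin n j)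
      _ = N * S := by rw [hSdef, Finset.mul_sum]
  have hA_lb : N * S - N ≤ A := by
    have : ∑ j ∈ range n, (N * a j - 1) ≤ A := by
      apply Finset.sum_le_sum
      intro j _
      have := aux_pow_lb (a j) (h1 j) n
      have hexp : (0:ℝ) ≤ (1 - a j)^n := pow_nonneg (by linarith [h1 j]) n
      linarith
    have heq : ∑ j ∈ range n, (N * a j - 1) = N * S - N := by
      rw [Finset.sum_sub_distrib, hSdef, Finset.mul_sum]
      simp [hNdef]
    linarith [heq ▸ this]
  -- bounds on B
  have hB_lb : 0 ≤ B := tsum_nonneg (fun j => hg0 n _)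
  have hB_ub : B ≤ N * (c+ε₁)^2/2 := by
    have hsum_shift : Summable (fun j : ℕ => (a (j+n))^2) :=
      (summable_nat_add_iff n).2 hsum_sq
    have hsum_inv_shift : Summable (fun j : ℕ => 1/(((j:ℝ)+N+2))^2) := by
      have := (summable_nat_add_iff n).2 aux_summable_inv_sq
      refine this.congr (fun j => ?_)
      push_cast; rw [hNdef]
    have step1 : B ≤ ∑' j : ℕ, (N^2/2 * (a (j+n))^2) := by
      apply Summable.tsum_le_tsum (fun j => ?_) ((hgsum n).comp_injective (add_left_injective n)) (hsum_shift.mul_left _)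
      · exact hg_sq n (j+n)
    have step2 : ∑' j : ℕ, (N^2/2 * (a (j+n))^2) = N^2/2 * ∑' j : ℕ, (a (j+n))^2 :=
      tsum_mul_left
    have step3 : ∑' j : ℕ, (a (j+n))^2 ≤ (c+ε₁)^2/(N+1) := by
      have ptwise : ∀ j : ℕ, (a (j+n))^2 ≤ (c+ε₁)^2 * (1/(((j:ℝ)+N+2))^2) := by
        intro j
        have hj : J ≤ j + n := le_trans hJn (Nat.le_add_left n j)
        have := hub (j+n) hj
        have hcast : (((j+n:ℕ)):ℝ) = (j:ℝ) + N := by push_cast; ring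
        have h2 : (0:ℝ) < (j:ℝ)+N+2 := by positivity
        have hle : a (j+n) ≤ (c+ε₁)/((j:ℝ)+N+2) := by
          rwa [hcast] at this
        calc (a (j+n))^2 ≤ ((c+ε₁)/((j:ℝ)+N+2))^2 := pow_le_pow_left₀ (h0 _) hle 2
          _ = (c+ε₁)^2 * (1/(((j:ℝ)+N+2))^2) := by rw [div_pow]; ring
      calc ∑' j : ℕ, (a (j+n))^2
          ≤ ∑' j : ℕ, ((c+ε₁)^2 * (1/(((j:ℝ)+N+2))^2)) :=
            Summable.tsum_le_tsum ptwise hsum_shift (hsum_inv_shift.mul_left _)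
        _ = (c+ε₁)^2 * ∑' j : ℕ, (1/(((j:ℝ)+N+2))^2) := tsum_mul_left
        _ ≤ (c+ε₁)^2 * (1/(N+1)) := by
            apply mul_le_mul_of_nonneg_left _ (by positivity)
            exact aux_tsum_sq_tail n
        _ = (c+ε₁)^2/(N+1) := by ring
    have step4 : N^2/2 * ((c+ε₁)^2/(N+1)) ≤ N * (c+ε₁)^2/2 := by
      rw [div_mul_div_comm, div_le_div_iff₀ (by positivity) (by norm_num : (0:ℝ) < 2)]
      nlinarith [mul_nonneg hN0 (sq_nonneg (c+ε₁))]
    calc B ≤ N^2/2 * ∑' j : ℕ, (a (j+n))^2 := by rw [← step2]; exact step1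
      _ ≤ N^2/2 * ((c+ε₁)^2/(N+1)) := by
          apply mul_le_mul_of_nonneg_left step3 (by positivity)
      _ ≤ N * (c+ε₁)^2/2 := step4
  -- bounds on L
  have hL_ub : L ≤ ln + 1 := by
    have h1' := aux_sum_inv_le_log n
    have h2' := aux_log_succ n hn1
    simp only [← hLdef] at h1'
    linarith
  have hL_lb : ln - Real.log 2 ≤ L := by
    have h1' := aux_log_le_sum_inv n
    have h2' : ln ≤ Real.log ((N:ℝ)+2) := by
      apply Real.log_le_log (by linarith)
      linarith
    simp only [← hLdef] at h1'
    linarith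
  -- final assembly
  clear_value T A B L S N ln
  have hlog2 : (0:ℝ) ≤ Real.log 2 := Real.log_nonneg (by norm_num)
  have hTub : T - c*N*ln ≤ ε₁*(N*ln) + C*N := by
    have e1 : (c+ε₁) * (N * L) ≤ (c+ε₁) * (N * (ln+1)) := by
      apply mul_le_mul_of_nonneg_left _ (by linarith [hε₁pos])
      exact mul_le_mul_of_nonneg_left hL_ub hN0
    have e2 : N * S ≤ N * ((J:ℝ) + (c+ε₁)*L) := mul_le_mul_of_nonneg_left hSub hN0
    have e3 : N * ((J:ℝ) + (c+ε₁)*L) = N*(J:ℝ) + (c+ε₁)*(N*L) := by ring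
    have e4 : (c+ε₁) * (N * (ln+1)) = c*(N*ln) + ε₁*(N*ln) + (c+ε₁)*N := by ring
    have e5 : C*N = c*(J:ℝ)*N + (c+ε₁)*N + (c+ε₁)^2/2*N + c*Real.log 2*N + (J:ℝ)*N + N := by
      rw [hCdef]; ring
    have hNJ : N*(J:ℝ) = (J:ℝ)*N := by ring
    have hlogterm : 0 ≤ c*Real.log 2*N := mul_nonneg (mul_nonneg hc.le hlog2) hN0
    have hcJN : 0 ≤ c*(J:ℝ)*N := mul_nonneg (mul_nonneg hc.le (Nat.cast_nonneg J)) hN0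
    nlinarith [hsplit, hA_ub, hB_ub]
  have hTlb : c*N*ln - T ≤ ε₁*(N*ln) + C*N := by
    have e1 : N * ((c-ε₁)*L - c*(J:ℝ)) ≤ N * S := mul_le_mul_of_nonneg_left hSlb hN0
    have e2 : (c-ε₁) * (N * (ln - Real.log 2)) ≤ (c-ε₁) * (N * L) := by
      apply mul_le_mul_of_nonneg_left _ (by linarith)
      exact mul_le_mul_of_nonneg_left hL_lb hN0
    have e3 : N * ((c-ε₁)*L - c*(J:ℝ)) = (c-ε₁)*(N*L) - c*(J:ℝ)*N := by ring
    have e4 : (c-ε₁) * (N * (ln - Real.log 2))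
        = c*(N*ln) - ε₁*(N*ln) - c*(N*Real.log 2) + ε₁*(N*Real.log 2) := by ring
    have e5 : ε₁*(N*Real.log 2) ≤ c*(N*Real.log 2) := by
      apply mul_le_mul_of_nonneg_right hε₁c (mul_nonneg hN0 hlog2)
    have e6 : c*(N*Real.log 2) = c*Real.log 2*N := by ring
    have e7 : C*N = c*(J:ℝ)*N + (c+ε₁)*N + (c+ε₁)^2/2*N + c*Real.log 2*N + (J:ℝ)*N + N := by
      rw [hCdef]; ring
    have hpos0 : 0 ≤ c + ε₁ := by linarith
    have hpos1 : 0 ≤ (c+ε₁)*N := mul_nonneg hpos0 hN0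
    have hpos2 : 0 ≤ (c+ε₁)^2/2*N := mul_nonneg (by positivity) hN0
    have hpos3 : 0 ≤ (J:ℝ)*N := mul_nonneg (Nat.cast_nonneg J) hN0
    have hpos4 : 0 ≤ ε₁*(N*Real.log 2) := mul_nonneg hε₁pos.le (mul_nonneg hN0 hlog2)
    nlinarith [hsplit, hA_lb, hB_lb]
  have habs : |T - c*N*ln| ≤ ε₁*(N*ln) + C*N := abs_le.2 ⟨by linarith, by linarith⟩
  have hfin1 : ε₁*(N*ln) ≤ (ε*c/2)*(N*ln) :=
    mul_le_mul_of_nonneg_right hε₁half (mul_nonneg hN0 hln0)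
  have hfin2 : C*N ≤ (ε*c/2)*(N*ln) := by
    have h1' : N * (2*C/(ε*c)) ≤ N * ln := mul_le_mul_of_nonneg_left hlogn hN0
    have h2' : (ε*c/2) * (N * (2*C/(ε*c))) = C*N := by
      field_simp
    have := mul_le_mul_of_nonneg_left h1' (show (0:ℝ) ≤ ε*c/2 by positivity)
    linarith [h2' ▸ this]
  have hnorm : ‖c*N*ln‖ = c*N*ln := by
    rw [Real.norm_eq_abs, abs_of_nonneg (mul_nonneg (mul_nonneg hc.le hN0) hln0)]
  rw [Real.norm_eq_abs]
  calc |T - c*N*ln| ≤ ε₁*(N*ln) + C*N := habs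
    _ ≤ (ε*c/2)*(N*ln) + (ε*c/2)*(N*ln) := by linarith
    _ = ε * (c*N*ln) := by ring
    _ = ε * ‖c*N*ln‖ := by rw [hnorm]

lemma aux_binom (n : ℕ) (hn : 1 ≤ n) (x : ℝ) :
    ∑ k ∈ Icc 2 n, (n.choose k : ℝ) * (-1:ℝ)^k * x^k = (1-x)^n - 1 + n*x := by
  have hexp : (1 - x)^n = ∑ k ∈ range (n+1), (n.choose k:ℝ) * (-1)^k * x^k := by
    rw [show (1 - x) = (-x) + 1 by ring, add_pow]
    refine Finset.sum_congr rfl (fun k _ => ?_)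
    rw [neg_pow]; ring
  have hset : range (n+1) = insert 0 (insert 1 (Icc 2 n)) := by
    ext k
    simp only [Finset.mem_range, Finset.mem_insert, Finset.mem_Icc]
    omega
  have h1notin : (1:ℕ) ∉ Icc 2 n := by simp
  have h0notin : (0:ℕ) ∉ insert 1 (Icc 2 n) := by simp
  rw [hset, Finset.sum_insert h0notin, Finset.sum_insert h1notin] at hexp
  simp only [Nat.choose_zero_right, Nat.choose_one_right, pow_zero, pow_one] at hexp
  push_cast at hexp
  linarith [hexp]

lemma aux_main (m : ℕ → ℝ) (c M : ℝ) (hc : 0 < c)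
    (hm0 : ∀ j, 0 ≤ m j) (hm1 : ∀ j, m j ≤ 1)
    (hmM : ∀ j, m j ≤ M/((j:ℝ)+2))
    (hten : Tendsto (fun j : ℕ => ((j:ℝ)+2) * m j) atTop (𝓝 c)) :
    (∀ k : ℕ, 2 ≤ k → Summable (fun j : ℕ => (m j)^k)) ∧
    Asymptotics.IsEquivalent atTop
      (fun n : ℕ => ∑ k ∈ Icc 2 n, (n.choose k:ℝ) * (-1:ℝ)^k * ∑' j : ℕ, (m j)^k)
      (fun n : ℕ => c * n * Real.log n) := by
  have hM0 : 0 ≤ M := by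
    by_contra h
    push_neg at h
    have h2 : M / ((0:ℕ):ℝ)+2 > 0 := by norm_num [h]
    have := (hm0 0).trans (hmM 0)
    have : M / (((0:ℕ):ℝ)+2) < 0 := div_neg_of_neg_of_pos h (by norm_num)
    linarith [(hm0 0).trans (hmM 0)]
  have hsum : ∀ k : ℕ, 2 ≤ k → Summable (fun j : ℕ => (m j)^k) := by
    intro k hk
    apply Summable.of_nonneg_of_le (fun j => pow_nonneg (hm0 j) k)
      (fun j => ?_) (aux_summable_inv_sq.mul_left (M^2))
    calc (m j)^k ≤ (m j)^2 := pow_le_pow_of_le_one (hm0 j) (hm1 j) hk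
      _ ≤ (M/((j:ℝ)+2))^2 := pow_le_pow_left₀ (hm0 j) (hmM j) 2
      _ = M^2 * (1/((j:ℝ)+2)^2) := by rw [div_pow]; ring
  refine ⟨hsum, ?_⟩
  have hkey := aux_key m c M hc hm0 hm1 hmM hten
  apply hkey.congr_left
  filter_upwards [eventually_ge_atTop 1] with n hn
  calc ∑' j : ℕ, ((1 - m j)^n - 1 + n * m j)
      = ∑' j : ℕ, ∑ k ∈ Icc 2 n, ((n.choose k:ℝ) * (-1:ℝ)^k * (m j)^k) :=
        tsum_congr (fun j => (aux_binom n hn (m j)).symm)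
    _ = ∑ k ∈ Icc 2 n, ∑' j : ℕ, ((n.choose k:ℝ) * (-1:ℝ)^k * (m j)^k) :=
        Summable.tsum_finsetSum (fun k hk => (hsum k (Finset.mem_Icc.1 hk).1).mul_left _)
    _ = ∑ k ∈ Icc 2 n, (n.choose k:ℝ) * (-1:ℝ)^k * ∑' j : ℕ, (m j)^k :=
        Finset.sum_congr rfl (fun k _ => tsum_mul_left)

set_option maxHeartbeats 1000000 in
/-- Let `F` be a Borel probability measure on `[0,1]` with continuous density
`f` satisfying `lim_{x→1⁻} f(x) = c > 0`.  Then `ζ_F(k) = ∑_{j=1}^∞ m_j^k` converges for every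
`k ≥ 2`, and `∑_{k=2}^n C(n,k)(−1)^k ζ_F(k) ∼ c n log n` as `n → ∞`. -/
theorem moment_zeta_alternating_sum_asymptotics_alpha_one
    (f : ℝ → ℝ) (hcont : ContinuousOn f (Set.Icc (0 : ℝ) 1)) (hnn : ∀ x, 0 ≤ f x)
    (hsupp : ∀ x, x ∉ Set.Icc (0 : ℝ) 1 → f x = 0)
    (hprob : ∫ x in (0 : ℝ)..1, f x = 1)
    (c : ℝ) (hc : 0 < c)
    (hlim : Filter.Tendsto f (nhdsWithin 1 (Set.Iio (1 : ℝ))) (nhds c)) :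
    (∀ k : ℕ, 2 ≤ k → Summable (fun j : ℕ => (∫ x in (0 : ℝ)..1, x ^ (j + 1) * f x) ^ k)) ∧
    Asymptotics.IsEquivalent Filter.atTop
      (fun n : ℕ => ∑ k ∈ Finset.Icc 2 n, (n.choose k : ℝ) * (-1 : ℝ) ^ k *
        ∑' j : ℕ, (∫ x in (0 : ℝ)..1, x ^ (j + 1) * f x) ^ k)
      (fun n : ℕ => c * n * Real.log n) := by
  have huIcc : Set.uIcc (0:ℝ) 1 = Set.Icc 0 1 := Set.uIcc_of_le zero_le_one
  have hfi : IntervalIntegrable f volume 0 1 := by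
    apply ContinuousOn.intervalIntegrable
    rw [huIcc]; exact hcont
  have hgc : ∀ j : ℕ, ContinuousOn (fun x : ℝ => x^(j+1) * f x) (Set.Icc 0 1) :=
    fun j => (continuous_pow (j+1)).continuousOn.mul hcont
  have hgi : ∀ j : ℕ, IntervalIntegrable (fun x : ℝ => x^(j+1) * f x) volume 0 1 := by
    intro j
    apply ContinuousOn.intervalIntegrable
    rw [huIcc]; exact hgc j
  obtain ⟨M, hMb⟩ := isCompact_Icc.exists_bound_of_continuousOn hcont
  have hfM : ∀ x ∈ Set.Icc (0:ℝ) 1, f x ≤ M := fun x hx => (le_abs_self _).trans (hMb x hx)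
  have hm0 : ∀ j : ℕ, 0 ≤ ∫ x in (0:ℝ)..1, x^(j+1) * f x := by
    intro j
    apply intervalIntegral.integral_nonneg zero_le_one
    intro x hx
    exact mul_nonneg (pow_nonneg hx.1 _) (hnn x)
  have hm1 : ∀ j : ℕ, (∫ x in (0:ℝ)..1, x^(j+1) * f x) ≤ 1 := by
    intro j
    have h := intervalIntegral.integral_mono_on zero_le_one (hgi j) hfi
      (fun x hx => mul_le_of_le_one_left (hnn x) (pow_le_one₀ hx.1 hx.2))
    rwa [hprob] at h
  have hpowint : ∀ (a : ℝ) (j : ℕ), ∫ x in a..1, x^(j+1) = (1 - a^(j+2))/((j:ℝ)+2) := by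
    intro a j
    rw [integral_pow, show j+1+1 = j+2 from by omega]
    push_cast
    ring
  have hmM : ∀ j : ℕ, (∫ x in (0:ℝ)..1, x^(j+1) * f x) ≤ M/((j:ℝ)+2) := by
    intro j
    have h1 : (∫ x in (0:ℝ)..1, x^(j+1) * f x) ≤ ∫ x in (0:ℝ)..1, M * x^(j+1) := by
      apply intervalIntegral.integral_mono_on zero_le_one (hgi j)
        ((continuous_const.mul (continuous_pow (j+1))).intervalIntegrable _ _)
      intro x hx
      simp only [Pi.mul_apply]
      rw [mul_comm (M : ℝ)]
      exact mul_le_mul_of_nonneg_left (hfM x hx) (pow_nonneg hx.1 _)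
    rw [intervalIntegral.integral_const_mul, hpowint 0 j] at h1
    rw [zero_pow (by omega : j+2 ≠ 0), sub_zero] at h1
    calc (∫ x in (0:ℝ)..1, x^(j+1) * f x) ≤ M * (1/((j:ℝ)+2)) := h1
      _ = M/((j:ℝ)+2) := by ring
  have hcw : ContinuousWithinAt f (Set.Icc 0 1) 1 := hcont 1 (by norm_num)
  have hf1 : f 1 = c := by
    have h2 : Tendsto f (𝓝[Set.Iio (1:ℝ)] 1) (𝓝 (f 1)) := by
      have h3 : Tendsto f (𝓝[Set.Icc (0:ℝ) 1] 1) (𝓝 (f 1)) := hcw.tendsto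
      have hIco : 𝓝[Set.Ico (0:ℝ) 1] 1 = 𝓝[Set.Iio (1:ℝ)] 1 :=
        nhdsWithin_Ico_eq_nhdsLT zero_lt_one
      rw [← hIco]
      exact h3.mono_left (nhdsWithin_mono 1 Set.Ico_subset_Icc_self)
    exact tendsto_nhds_unique h2 hlim
  have hten : Tendsto (fun j : ℕ => ((j:ℝ)+2) * ∫ x in (0:ℝ)..1, x^(j+1) * f x)
      atTop (𝓝 c) := by
    rw [Metric.tendsto_atTop]
    intro ε hε
    set K := |M| + |c| + 1 with hK
    have hKpos : 0 < K := by positivity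
    have hMK : M - c - ε/4 ≤ K := by
      have h1 := le_abs_self M
      have h2 := neg_abs_le c
      rw [hK]; linarith
    have hcK : c - ε/4 ≤ K := by
      have h2 := le_abs_self c
      have h3 := abs_nonneg M
      rw [hK]; linarith
    clear_value K
    obtain ⟨δ, hδpos, hδ⟩ := Metric.continuousWithinAt_iff.1 hcw (ε/4) (by positivity)
    set t := max (1 - δ/2) 0 with ht
    have ht0 : 0 ≤ t := le_max_right _ _
    have ht1 : t < 1 := by
      apply max_lt _ zero_lt_one
      linarith
    have htd : 1 - t ≤ δ/2 := by
      have : 1 - δ/2 ≤ t := le_max_left _ _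
      linarith
    clear_value t
    have hfb : ∀ x ∈ Set.Icc t 1, |f x - c| < ε/4 := by
      intro x hx
      have hxI : x ∈ Set.Icc (0:ℝ) 1 := ⟨le_trans ht0 hx.1, hx.2⟩
      have hdist : dist x 1 < δ := by
        rw [Real.dist_eq, abs_of_nonpos (by linarith [hx.2])]
        linarith [hx.1]
      have := hδ hxI hdist
      rwa [Real.dist_eq, hf1] at this
    have htend : Tendsto (fun j : ℕ => t^(j+2)) atTop (𝓝 0) :=
      (tendsto_pow_atTop_nhds_zero_of_lt_one ht0 ht1).comp (tendsto_add_atTop_nat 2)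
    obtain ⟨J, hJ⟩ := Metric.tendsto_atTop.1 htend (ε/(4*K)) (by positivity)
    refine ⟨J, fun j hj => ?_⟩
    have hr : t^(j+2) < ε/(4*K) := by
      have := hJ j hj
      rwa [Real.dist_eq, sub_zero, abs_of_nonneg (pow_nonneg ht0 _)] at this
    set r := t^(j+2) with hrdef
    have hr0 : 0 ≤ r := pow_nonneg ht0 _
    have hr1 : r ≤ 1 := pow_le_one₀ ht0 ht1.le
    have hj2 : (0:ℝ) < (j:ℝ)+2 := by positivity
    have hgi1 : IntervalIntegrable (fun x : ℝ => x^(j+1) * f x) volume 0 t := by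
      apply (hgi j).mono_set
      rw [huIcc, Set.uIcc_of_le ht0]
      exact Set.Icc_subset_Icc_right ht1.le
    have hgi2 : IntervalIntegrable (fun x : ℝ => x^(j+1) * f x) volume t 1 := by
      apply (hgi j).mono_set
      rw [huIcc, Set.uIcc_of_le ht1.le]
      exact Set.Icc_subset_Icc_left ht0
    have hsplitint : (∫ x in (0:ℝ)..t, x^(j+1) * f x) + (∫ x in t..1, x^(j+1) * f x)
        = ∫ x in (0:ℝ)..1, x^(j+1) * f x :=
      intervalIntegral.integral_add_adjacent_intervals hgi1 hgi2
    -- lower bound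
    have hlow : (c - ε/4) * ((1-r)/((j:ℝ)+2)) ≤ ∫ x in (0:ℝ)..1, x^(j+1) * f x := by
      have h1 : (∫ x in t..1, (c - ε/4) * x^(j+1)) ≤ ∫ x in t..1, x^(j+1) * f x := by
        apply intervalIntegral.integral_mono_on ht1.le
          ((continuous_const.mul (continuous_pow (j+1))).intervalIntegrable _ _) hgi2
        intro x hx
        simp only [Pi.mul_apply]
        rw [mul_comm (c - ε/4)]
        apply mul_le_mul_of_nonneg_left _ (pow_nonneg (le_trans ht0 hx.1) _)
        have := hfb x hx
        rw [abs_lt] at this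
        linarith [this.1]
      rw [intervalIntegral.integral_const_mul, hpowint t j, ← hrdef] at h1
      have h2 : (0:ℝ) ≤ ∫ x in (0:ℝ)..t, x^(j+1) * f x := by
        apply intervalIntegral.integral_nonneg ht0
        intro x hx
        exact mul_nonneg (pow_nonneg hx.1 _) (hnn x)
      linarith [hsplitint]
    -- upper bound
    have hup : (∫ x in (0:ℝ)..1, x^(j+1) * f x)
        ≤ M * (r/((j:ℝ)+2)) + (c + ε/4) * ((1-r)/((j:ℝ)+2)) := by
      have h1 : (∫ x in (0:ℝ)..t, x^(j+1) * f x) ≤ ∫ x in (0:ℝ)..t, M * x^(j+1) := by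
        apply intervalIntegral.integral_mono_on ht0 hgi1
          ((continuous_const.mul (continuous_pow (j+1))).intervalIntegrable _ _)
        intro x hx
        simp only [Pi.mul_apply]
        rw [mul_comm (M : ℝ)]
        exact mul_le_mul_of_nonneg_left
          (hfM x ⟨hx.1, le_trans hx.2 ht1.le⟩) (pow_nonneg hx.1 _)
      have h1' : (∫ x in (0:ℝ)..t, M * x^(j+1)) = M * (r/((j:ℝ)+2)) := by
        rw [intervalIntegral.integral_const_mul, integral_pow,
          show j+1+1 = j+2 from by omega, hrdef]
        rw [zero_pow (by omega : j+2 ≠ 0)]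
        push_cast
        ring
      rw [h1'] at h1
      have h2 : (∫ x in t..1, x^(j+1) * f x) ≤ ∫ x in t..1, (c + ε/4) * x^(j+1) := by
        apply intervalIntegral.integral_mono_on ht1.le hgi2
          ((continuous_const.mul (continuous_pow (j+1))).intervalIntegrable _ _)
        intro x hx
        simp only [Pi.mul_apply]
        rw [mul_comm (c + ε/4)]
        apply mul_le_mul_of_nonneg_left _ (pow_nonneg (le_trans ht0 hx.1) _)
        have := hfb x hx
        rw [abs_lt] at this
        linarith [this.2]
      rw [intervalIntegral.integral_const_mul, hpowint t j, ← hrdef] at h2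
      linarith [hsplitint]
    -- combine
    clear_value r
    have hlower : (c - ε/4) * (1-r) ≤ ((j:ℝ)+2) * ∫ x in (0:ℝ)..1, x^(j+1) * f x := by
      have := mul_le_mul_of_nonneg_left hlow hj2.le
      have heq : ((j:ℝ)+2) * ((c - ε/4) * ((1-r)/((j:ℝ)+2))) = (c - ε/4) * (1-r) := by
        field_simp
      linarith [heq ▸ this]
    have hupper : ((j:ℝ)+2) * (∫ x in (0:ℝ)..1, x^(j+1) * f x)
        ≤ M * r + (c + ε/4) * (1-r) := by
      have := mul_le_mul_of_nonneg_left hup hj2.le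
      have heq : ((j:ℝ)+2) * (M * (r/((j:ℝ)+2)) + (c + ε/4) * ((1-r)/((j:ℝ)+2)))
          = M * r + (c + ε/4) * (1-r) := by
        field_simp
      linarith [heq ▸ this]
    have hKr : K * r ≤ ε/4 := by
      have h1 : K * r ≤ K * (ε/(4*K)) := mul_le_mul_of_nonneg_left hr.le hKpos.le
      have h2 : K * (ε/(4*K)) = ε/4 := by field_simp
      linarith [h2 ▸ h1]
    have hMKr : (M - c - ε/4) * r ≤ K * r := mul_le_mul_of_nonneg_right hMK hr0
    have hcKr : (c - ε/4) * r ≤ K * r := mul_le_mul_of_nonneg_right hcK hr0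
    rw [Real.dist_eq, abs_lt]
    have exp1 : (c - ε/4) * (1-r) = c - ε/4 - (c - ε/4)*r := by ring
    have exp2 : M * r + (c + ε/4) * (1-r) = (M - c - ε/4)*r + c + ε/4 := by ring
    constructor
    · linarith
    · linarith
  exact aux_main _ c M hc hm0 hm1 hmM hten
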